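/- arXiv:1006.2687 — 4 statements merged into one kernel-verified Lean document; each statement's English description precedes it below -/
import Mathlib

section
/- Let (b_i), (c_i) be the intersection numbers of a distance-regular graph with diameter D, valency k = b_0, and n vertices, and define φ_0 = n-1 and φ_i = (c_i φ_{i-1} - k)/b_i for 1 ≤ i ≤ D-1. Then for each 0 ≤ i ≤ D-1, φ_i = k·(Σ_{j>i} |K_j|)/e_i, where |K_j| is the number of vertices at distance j from a fixed vertex and e_i = b_i|K_i| is the number of edges between K_i and K_{i+1}. -/
/-- In a distance-regular graph with diameter `D`, valency `k = b 0`,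
`n` vertices, layer sizes `K i` (number of vertices at distance `i` from a fixed
vertex) and potentials `φ` defined by `φ 0 = n - 1`,
`φ i = (c i * φ (i-1) - k) / b i`, one has
`φ i = k * (∑_{j > i} K j) / e i` where `e i = b i * K i`. -/
theorem potentials_eq_layer_formula
    (D : ℕ) (hD : 1 ≤ D) (n k : ℝ) (b c K φ : ℕ → ℝ)
    (hk : k = b 0) (hk3 : 3 ≤ k)
    (hK0 : K 0 = 1)
    (hKpos : ∀ i ≤ D, 0 < K i)
    (hn : n = ∑ j ∈ Finset.range (D + 1), K j)
    (hbc : ∀ i < D, c (i + 1) * K (i + 1) = b i * K i)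
    (hbpos : ∀ i < D, 0 < b i)
    (hcpos : ∀ i, 1 ≤ i → i ≤ D → 0 < c i)
    (hφ0 : φ 0 = n - 1)
    (hφ : ∀ i, 1 ≤ i → i ≤ D - 1 → φ i = (c i * φ (i - 1) - k) / b i) :
    ∀ i ≤ D - 1, φ i = k * (∑ j ∈ Finset.Icc (i + 1) D, K j) / (b i * K i) := by
  intro i
  induction i with
  | zero =>
    intro _
    have hb0 : b 0 ≠ 0 := ne_of_gt (hbpos 0 (by omega))
    have hsplit : Finset.range (D + 1) = insert 0 (Finset.Icc 1 D) := by
      ext x; simp [Finset.mem_Icc]; omega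
    have h0 : (0 : ℕ) ∉ Finset.Icc 1 D := by simp
    rw [hφ0, hn, hK0, hk, hsplit, Finset.sum_insert h0, hK0]
    field_simp
    ring
  | succ i ih =>
    intro hi
    have hiD : i < D := by omega
    have hi1D : i + 1 ≤ D := by omega
    have hKi : K i ≠ 0 := ne_of_gt (hKpos i (by omega))
    have hKi1 : K (i + 1) ≠ 0 := ne_of_gt (hKpos (i + 1) hi1D)
    have hbi : b i ≠ 0 := ne_of_gt (hbpos i hiD)
    have hbi1 : b (i + 1) ≠ 0 := ne_of_gt (hbpos (i + 1) (by omega))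
    have hci1 : c (i + 1) ≠ 0 := ne_of_gt (hcpos (i + 1) (by omega) hi1D)
    have hrec := hφ (i + 1) (by omega) (by omega)
    have hprev := ih (by omega)
    have hbci := hbc i hiD
    have hsplit : Finset.Icc (i + 1) D = insert (i + 1) (Finset.Icc (i + 2) D) := by
      ext x; simp [Finset.mem_Icc]; omega
    have hnotmem : i + 1 ∉ Finset.Icc (i + 2) D := by simp
    rw [hsplit, Finset.sum_insert hnotmem] at hprev
    simp only [Nat.add_sub_cancel] at hrec
    rw [← hbci] at hprev
    rw [hrec, hprev]
    field_simp
    ring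
end

section
/- With the potentials φ_i defined as above on a distance-regular graph of diameter D, one has φ_{D-1} = k/c_D. -/
/-- With the potentials `φ` of a distance-regular graph of diameter `D`,
one has `φ (D-1) = k / c D`. -/
theorem potential_last_eq_k_div_cD
    (D : ℕ) (hD : 1 ≤ D) (n k : ℝ) (b c K φ : ℕ → ℝ)
    (hk : k = b 0) (hk3 : 3 ≤ k)
    (hK0 : K 0 = 1)
    (hKpos : ∀ i ≤ D, 0 < K i)
    (hn : n = ∑ j ∈ Finset.range (D + 1), K j)
    (hbc : ∀ i < D, c (i + 1) * K (i + 1) = b i * K i)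
    (hbpos : ∀ i < D, 0 < b i)
    (hcpos : ∀ i, 1 ≤ i → i ≤ D → 0 < c i)
    (hφ0 : φ 0 = n - 1)
    (hφ : ∀ i, 1 ≤ i → i ≤ D - 1 → φ i = (c i * φ (i - 1) - k) / b i) :
    φ (D - 1) = k / c D := by
  have key : ∀ i, i ≤ D - 1 →
      φ i * (b i * K i) = k * ∑ j ∈ Finset.Ico (i+1) (D+1), K j := by
    intro i
    induction i with
    | zero =>
      intro _
      have hsplit : ∑ j ∈ Finset.Ico 0 (D+1), K j
          = K 0 + ∑ j ∈ Finset.Ico 1 (D+1), K j :=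
        Finset.sum_eq_sum_Ico_succ_bot (by omega) K
      have hn' : n = 1 + ∑ j ∈ Finset.Ico 1 (D+1), K j := by
        rw [hn, Finset.range_eq_Ico, hsplit, hK0]
      rw [hφ0, hn', ← hk, hK0]
      ring
    | succ i ih =>
      intro hi
      have hi1 : i + 1 ≤ D - 1 := hi
      have hiD : i + 1 < D := by omega
      have hb : b (i+1) ≠ 0 := ne_of_gt (hbpos _ hiD)
      have hrec := hφ (i+1) (by omega) hi1
      simp only [Nat.add_sub_cancel] at hrec
      have hprev := ih (by omega)
      have hsplit : ∑ j ∈ Finset.Ico (i+1) (D+1), K j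
          = K (i+1) + ∑ j ∈ Finset.Ico (i+2) (D+1), K j :=
        Finset.sum_eq_sum_Ico_succ_bot (by omega) K
      have hbc' := hbc i (by omega)
      have e1 : (c (i+1) * φ i - k) / b (i+1) * (b (i+1) * K (i+1))
          = (c (i+1) * φ i - k) * K (i+1) := by
        field_simp
      rw [hrec, e1]
      have : (c (i+1) * φ i - k) * K (i+1)
          = φ i * (b i * K i) - k * K (i+1) := by
        rw [← hbc']; ring
      rw [this, hprev, hsplit]
      ring
  have hfin := key (D-1) le_rfl
  have hD1 : D - 1 + 1 = D := by omega
  have hsum : ∑ j ∈ Finset.Ico (D-1+1) (D+1), K j = K D := by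
    rw [hD1]
    rw [Finset.sum_Ico_succ_top (by omega)]
    simp
  have hbc' := hbc (D-1) (by omega)
  rw [hD1] at hbc'
  rw [hsum, ← hbc'] at hfin
  have hc : 0 < c D := hcpos D hD le_rfl
  have hKD : 0 < K D := hKpos D le_rfl
  have : φ (D-1) * (c D * K D) = (k / c D) * (c D * K D) := by
    rw [hfin]; field_simp
  exact mul_right_cancel₀ (by positivity) this
end

section
/- Let D ≤ 5 and b_1 ≥ 5. Then for the potentials of a distance-regular graph, (φ_1 + ... + φ_{D-1})/φ_0 ≤ 4/b_1 ≤ 0.8. -/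
/-- If `D ≤ 5` and `b 1 ≥ 5`, then the potentials of a distance-regular
graph satisfy `(φ 1 + ... + φ (D-1)) / φ 0 ≤ 4 / b1 ≤ 0.8`. -/
theorem small_diameter_bound
    (D : ℕ) (hD : 1 ≤ D) (hD5 : D ≤ 5)
    (b1 : ℝ) (hb1 : 5 ≤ b1)
    (φ : ℕ → ℝ)
    (hφpos : ∀ i ≤ D - 1, 0 < φ i)
    (hφdec : ∀ i, i + 1 ≤ D - 1 → φ (i + 1) < φ i)
    (hφ1 : φ 1 * b1 < φ 0) :
    (∑ i ∈ Finset.Icc 1 (D - 1), φ i) / φ 0 ≤ 4 / b1 ∧ 4 / b1 ≤ 0.8 := by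
  have hb1pos : (0:ℝ) < b1 := by linarith
  have hφ0 : 0 < φ 0 := hφpos 0 (Nat.zero_le _)
  constructor
  · rcases Nat.eq_or_lt_of_le hD with h1 | h1
    · -- D = 1 : empty sum
      have : D - 1 = 0 := by omega
      rw [this]
      simp only [Finset.Icc_eq_empty_of_lt (by norm_num : (1:ℕ) > 0), Finset.sum_empty,
        zero_div]
      positivity
    · have h1le : 1 ≤ D - 1 := by omega
      have hφ1pos : 0 < φ 1 := hφpos 1 h1le
      have key : ∀ i, 1 ≤ i → i ≤ D - 1 → φ i ≤ φ 1 := by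
        intro i
        induction i with
        | zero => intro h; omega
        | succ n ih =>
          intro _ hle
          rcases Nat.eq_zero_or_pos n with hn | hn
          · subst hn; exact le_refl _
          · exact le_trans (le_of_lt (hφdec n hle)) (ih hn (by omega))
      have hsum : (∑ i ∈ Finset.Icc 1 (D - 1), φ i) ≤ (D - 1) * φ 1 := by
        calc (∑ i ∈ Finset.Icc 1 (D - 1), φ i)
            ≤ (Finset.Icc 1 (D - 1)).card • φ 1 :=
              Finset.sum_le_card_nsmul _ _ _ (fun i hi => by
                simp only [Finset.mem_Icc] at hi
                exact key i hi.1 hi.2)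
          _ = (D - 1) * φ 1 := by
              rw [Nat.card_Icc, Nat.add_sub_cancel, nsmul_eq_mul, Nat.cast_sub hD, Nat.cast_one]
      have hd4 : ((D:ℝ) - 1) ≤ 4 := by
        have h5 : (D:ℝ) ≤ 5 := by exact_mod_cast hD5
        linarith
      rw [div_le_div_iff₀ hφ0 hb1pos]
      have h2 : (∑ i ∈ Finset.Icc 1 (D - 1), φ i) * b1 ≤ (D - 1 : ℝ) * φ 1 * b1 := by
        apply mul_le_mul_of_nonneg_right hsum (le_of_lt hb1pos)
      have h3 : ((D:ℝ) - 1) * φ 1 * b1 ≤ 4 * (φ 1 * b1) := by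
        rw [mul_assoc]
        exact mul_le_mul_of_nonneg_right hd4 (by positivity)
      nlinarith
  · rw [div_le_iff₀ hb1pos]; norm_num; linarith
end

section
/- Suppose b_1 ≥ 5, j ≥ 4, c_2 = 1, and b_2/c_2 ≥ 3, and for all 2 ≤ i < j we have c_i/b_i ≤ (b_1−2)/(b_1−1), with D ≤ 3j−1. Then with α = (b_1−2)/(b_1−1), the sum of potential ratios satisfies (φ_1+...+φ_{D-1})/φ_0 < (b_1+2)/(3b_1) + (−2)/(3 b_1 α^{5/2} e ln α), and for b_1 ≥ 5 this bound is less than 0.87. -/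
open Finset

private lemma xax_le {a : ℝ} (ha0 : 0 < a) (ha1 : a < 1) {x : ℝ} (hx : 0 < x) :
    x * a ^ x ≤ 1 / (Real.exp 1 * (-Real.log a)) := by
  have hL : 0 < -Real.log a := by
    have := Real.log_neg ha0 ha1; linarith
  have hax : a ^ x = Real.exp (-(x * (-Real.log a))) := by
    rw [Real.rpow_def_of_pos ha0]; ring_nf
  set t := x * (-Real.log a) with ht
  have htpos : 0 < t := mul_pos hx hL
  have h1 : t * Real.exp 1 ≤ Real.exp t := by
    have h2 := Real.add_one_le_exp (t - 1)
    rw [Real.exp_sub] at h2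
    rw [← le_div_iff₀ (Real.exp_pos 1)]
    linarith
  rw [le_div_iff₀ (by positivity : 0 < Real.exp 1 * (-Real.log a))]
  rw [hax, Real.exp_neg]
  have hrw : x * (Real.exp t)⁻¹ * (Real.exp 1 * (-Real.log a)) = t * Real.exp 1 / Real.exp t := by
    rw [ht]; field_simp
  rw [hrw, div_le_one (Real.exp_pos t)]
  exact h1

set_option maxHeartbeats 1600000 in
private lemma bound_lt_087 (b1 : ℝ) (hb1 : 5 ≤ b1) :
    (b1 + 2) / (3 * b1) +
        (-2) / (3 * b1 * ((b1 - 2) / (b1 - 1)) ^ ((5 : ℝ) / 2) * Real.exp 1 *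
          Real.log ((b1 - 2) / (b1 - 1))) < 0.87 := by
  set a := (b1 - 2) / (b1 - 1) with hadef
  have hb1p : (0:ℝ) < b1 := by linarith
  have hb11 : b1 - 1 ≠ 0 := ne_of_gt (by linarith)
  have ha0 : 0 < a := div_pos (by linarith) (by linarith)
  have ha1 : a < 1 := by rw [hadef, div_lt_one (by linarith)]; linarith
  set s := Real.sqrt a with hsdef
  have hs0 : 0 < s := Real.sqrt_pos.2 ha0
  have hs2 : s ^ 2 = a := Real.sq_sqrt ha0.le
  have hs1 : s < 1 := by nlinarith
  have ha34 : 3/4 ≤ a := by rw [hadef, le_div_iff₀ (by linarith)]; linarith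
  have hrp : a ^ ((5:ℝ)/2) = s ^ 5 := by
    rw [hsdef, Real.sqrt_eq_rpow, ← Real.rpow_natCast (a ^ ((1:ℝ)/2)) 5,
      ← Real.rpow_mul ha0.le]
    norm_num
  have hLneg : Real.log a < 0 := Real.log_neg ha0 ha1
  have hlogb : 2 * (1 - s) ≤ -Real.log a := by
    have h1 : Real.log a = 2 * Real.log s := by
      rw [← hs2, Real.log_pow]; push_cast; ring
    have h2 : Real.log s ≤ s - 1 := Real.log_le_sub_one_of_pos hs0
    linarith
  have hE : (2.718:ℝ) < Real.exp 1 := by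
    have := Real.exp_one_gt_d9; linarith
  have hb1s : b1 * (1 - s^2) = 2 - s^2 := by
    rw [hs2, hadef]; field_simp; ring
  have hs866 : (0.866:ℝ) ≤ s := by nlinarith
  have hdenpos : 0 < 3 * b1 * s^5 * (2.718 * (2 * (1 - s))) := by
    apply mul_pos (by positivity) (by nlinarith)
  have hden2 : 3 * b1 * s^5 * (2.718 * (2 * (1 - s))) ≤
      3 * b1 * s^5 * (Real.exp 1 * (-Real.log a)) := by
    have h9 : (2.718:ℝ) * (2 * (1 - s)) ≤ Real.exp 1 * (-Real.log a) :=
      mul_le_mul hE.le hlogb (by linarith) (by positivity)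
    exact mul_le_mul_of_nonneg_left h9 (by positivity)
  have hB : (-2) / (3 * b1 * a ^ ((5:ℝ)/2) * Real.exp 1 * Real.log a) ≤
      2 / (3 * b1 * s^5 * (2.718 * (2 * (1 - s)))) := by
    have heq : (-2) / (3 * b1 * a ^ ((5:ℝ)/2) * Real.exp 1 * Real.log a) =
        2 / (3 * b1 * s^5 * (Real.exp 1 * (-Real.log a))) := by
      rw [hrp, show 3 * b1 * s^5 * Real.exp 1 * Real.log a =
        -(3 * b1 * s^5 * (Real.exp 1 * (-Real.log a))) by ring, div_neg, neg_div, neg_neg]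
    rw [heq]
    apply div_le_div_of_nonneg_left (by norm_num) hdenpos hden2
  have hkey : 1 + s < 2.718 * s^5 * (1.22 + 0.39 * s^2) := by
    nlinarith [hs866, hs1, hs0.le,
      mul_nonneg (sq_nonneg (s - 0.87)) (pow_nonneg hs0.le 5),
      mul_nonneg (sq_nonneg (s - 0.87)) (pow_nonneg hs0.le 4),
      mul_nonneg (sq_nonneg (s - 0.87)) (pow_nonneg hs0.le 3),
      mul_nonneg (sq_nonneg (s - 0.87)) (pow_nonneg hs0.le 2),
      mul_nonneg (sq_nonneg (s - 0.87)) hs0.le,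
      sq_nonneg (s - 0.87)]
  have h1s : (0:ℝ) < 1 + s := by linarith
  have hueq : 2.718 * s^5 * (1 - s) * (1.61 * b1 - 2) * (1 + s) =
      2.718 * s^5 * (1.22 + 0.39 * s^2) := by
    linear_combination (2.718 * s^5 * 1.61) * hb1s
  have hmain : 1 < 2.718 * s^5 * (1 - s) * (1.61 * b1 - 2) := by
    nlinarith [hkey, hueq, h1s]
  have hAB : (b1 + 2) / (3 * b1) + 2 / (3 * b1 * s^5 * (2.718 * (2 * (1 - s)))) < 0.87 := by
    have hA : (0.87:ℝ) - (b1 + 2) / (3 * b1) = (1.61 * b1 - 2) / (3 * b1) := by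
      field_simp; ring
    have hBlt : 2 / (3 * b1 * s^5 * (2.718 * (2 * (1 - s)))) < (1.61 * b1 - 2) / (3 * b1) := by
      rw [div_lt_div_iff₀ hdenpos (by linarith : (0:ℝ) < 3 * b1)]
      nlinarith [mul_lt_mul_of_pos_left hmain (by linarith : (0:ℝ) < 3 * b1)]
    linarith
  linarith [hB, hAB]

set_option maxHeartbeats 1600000 in
/-- Case `b1 ≥ 5`, `j ≥ 4`, `c 2 = 1`, `b2/c2 ≥ 3`: with
`α = (b1 - 2)/(b1 - 1)`, the ratio sum of potentials is bounded by
`(b1 + 2)/(3 b1) + (-2)/(3 b1 α^{5/2} e ln α)`, and this bound is `< 0.87`. -/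
theorem case_fade_subcase_one_bound
    (b1 : ℝ) (hb1 : 5 ≤ b1)
    (j D : ℕ) (hj : 4 ≤ j) (hD : D ≤ 3 * j - 1)
    (φ : ℕ → ℝ)
    (hφpos : ∀ i ≤ D - 1, 0 < φ i)
    (hφdec : ∀ i, i + 1 ≤ D - 1 → φ (i + 1) < φ i)
    (hr1 : φ 1 / φ 0 < 1 / b1)
    (hr2 : φ 2 / φ 1 ≤ 1 / 3)
    (hri : ∀ i, 2 ≤ i → i + 1 < j → φ (i + 1) / φ i ≤ (b1 - 2) / (b1 - 1)) :
    (∑ i ∈ Finset.Icc 1 (D - 1), φ i) / φ 0 <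
      (b1 + 2) / (3 * b1) +
        (-2) / (3 * b1 * ((b1 - 2) / (b1 - 1)) ^ ((5 : ℝ) / 2) * Real.exp 1 *
          Real.log ((b1 - 2) / (b1 - 1))) ∧
    (b1 + 2) / (3 * b1) +
        (-2) / (3 * b1 * ((b1 - 2) / (b1 - 1)) ^ ((5 : ℝ) / 2) * Real.exp 1 *
          Real.log ((b1 - 2) / (b1 - 1))) < 0.87 := by
  refine ⟨?_, bound_lt_087 b1 hb1⟩
  set a := (b1 - 2) / (b1 - 1) with hadef
  set m := D - 1 with hm
  have hb1p : (0:ℝ) < b1 := by linarith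
  have hb11 : b1 - 1 ≠ 0 := ne_of_gt (by linarith)
  have ha0 : 0 < a := div_pos (by linarith) (by linarith)
  have ha1 : a < 1 := by rw [hadef, div_lt_one (by linarith)]; linarith
  have hLneg : Real.log a < 0 := Real.log_neg ha0 ha1
  have hap : 0 < a ^ ((5:ℝ)/2) := Real.rpow_pos_of_pos ha0 _
  have hEp : (0:ℝ) < Real.exp 1 := Real.exp_pos 1
  have hB2pos : 0 < (-2) / (3 * b1 * a ^ ((5:ℝ)/2) * Real.exp 1 * Real.log a) := by
    apply div_pos_of_neg_of_neg (by norm_num)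
    have h : 0 < 3 * b1 * a ^ ((5:ℝ)/2) * Real.exp 1 := by positivity
    exact mul_neg_of_pos_of_neg h hLneg
  have hφ0 : 0 < φ 0 := hφpos 0 (Nat.zero_le _)
  have hB1pos : 0 < (b1 + 2) / (3 * b1) := by positivity
  rcases Nat.eq_zero_or_pos m with hm0 | hm1
  · rw [hm0]
    rw [show Finset.Icc 1 0 = (∅ : Finset ℕ) from Finset.Icc_eq_empty (by omega),
      Finset.sum_empty, zero_div]
    linarith
  -- m ≥ 1
  have hφ1m : φ 1 * b1 < 1 * φ 0 := (div_lt_div_iff₀ hφ0 hb1p).1 hr1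
  -- pointwise bound for i ≥ 2
  have hC : ∀ i, 2 ≤ i → i ≤ m → φ i ≤ φ 0 / (3 * b1) * a ^ (min i (j - 1) - 2) := by
    intro i h2i
    induction i, h2i using Nat.le_induction with
    | base =>
      intro hi
      have hφ1pos : 0 < φ 1 := hφpos 1 (by omega)
      have hφ2' : φ 2 * 3 ≤ 1 * φ 1 := (div_le_div_iff₀ hφ1pos (by norm_num)).1 hr2
      rw [show min 2 (j - 1) - 2 = 0 by omega, pow_zero, mul_one,
        le_div_iff₀ (by positivity : (0:ℝ) < 3 * b1)]
      have h3 := mul_le_mul_of_nonneg_right hφ2' hb1p.le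
      nlinarith
    | succ i h2i ih =>
      intro hi
      have hbi := ih (by omega)
      have hφipos : 0 < φ i := hφpos i (by omega)
      by_cases hij : i + 1 < j
      · have h := hri i h2i hij
        have h' : φ (i + 1) ≤ a * φ i := by
          rw [div_le_iff₀ hφipos] at h; linarith
        rw [show min (i + 1) (j - 1) - 2 = (min i (j - 1) - 2) + 1 by omega, pow_succ]
        calc φ (i + 1) ≤ a * φ i := h'
          _ ≤ a * (φ 0 / (3 * b1) * a ^ (min i (j - 1) - 2)) :=
              mul_le_mul_of_nonneg_left hbi ha0.le
          _ = φ 0 / (3 * b1) * (a ^ (min i (j - 1) - 2) * a) := by ring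
      · have hmin : min (i + 1) (j - 1) = min i (j - 1) := by omega
        rw [hmin]
        have hdec := hφdec i (by omega)
        linarith
  -- split the sum
  have hsplit : Finset.Icc 1 m = insert 1 (Finset.Icc 2 m) := by
    ext x; simp only [Finset.mem_Icc, Finset.mem_insert]; omega
  have h1notin : (1:ℕ) ∉ Finset.Icc 2 m := by simp
  rw [hsplit, Finset.sum_insert h1notin]
  -- geometric bound
  have hgeom : ∑ i ∈ Finset.Icc 2 m, a ^ (i - 2) ≤ b1 - 1 := by
    rw [← Finset.Ico_add_one_right_eq_Icc, Finset.sum_Ico_eq_sum_range]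
    have he : ∑ k ∈ Finset.range (m + 1 - 2), a ^ (2 + k - 2) =
        ∑ k ∈ Finset.range (m + 1 - 2), a ^ k := by
      apply Finset.sum_congr rfl; intro k _; congr 1; omega
    rw [he, geom_sum_eq (ne_of_lt ha1)]
    rw [div_le_iff_of_neg (by linarith : a - 1 < 0)]
    have hA : (b1 - 1) * (a - 1) = -1 := by
      rw [hadef]; field_simp; norm_num
    nlinarith [pow_nonneg ha0.le (m + 1 - 2)]
  -- tail bound
  have htail : ∑ i ∈ Finset.Icc 2 m, (if j ≤ i then a ^ (j - 3) else 0) ≤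
      (2 * (j:ℝ) - 1) * a ^ (j - 3) := by
    rw [← Finset.sum_filter, Finset.sum_const, nsmul_eq_mul]
    apply mul_le_mul_of_nonneg_right ?_ (pow_nonneg ha0.le _)
    have hsub : (Finset.Icc 2 m).filter (fun i => j ≤ i) ⊆ Finset.Icc j m := by
      intro x hx
      simp only [Finset.mem_filter, Finset.mem_Icc] at hx ⊢
      omega
    have hcard : ((Finset.Icc 2 m).filter (fun i => j ≤ i)).card ≤ 2 * j - 1 := by
      calc ((Finset.Icc 2 m).filter (fun i => j ≤ i)).card
          ≤ (Finset.Icc j m).card := Finset.card_le_card hsub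
        _ = m + 1 - j := Nat.card_Icc j m
        _ ≤ 2 * j - 1 := by omega
    calc (((Finset.Icc 2 m).filter (fun i => j ≤ i)).card : ℝ)
        ≤ ((2 * j - 1 : ℕ) : ℝ) := Nat.cast_le.2 hcard
      _ = 2 * (j:ℝ) - 1 := by
          rw [Nat.cast_sub (by omega : 1 ≤ 2 * j)]; push_cast; ring
  -- termwise bound
  have hterm : ∀ i ∈ Finset.Icc 2 m,
      φ i ≤ φ 0 / (3 * b1) * (a ^ (i - 2) + if j ≤ i then a ^ (j - 3) else 0) := by
    intro i hi
    rw [Finset.mem_Icc] at hi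
    have hc := hC i hi.1 hi.2
    have hK : (0:ℝ) ≤ φ 0 / (3 * b1) := by positivity
    by_cases hij : j ≤ i
    · rw [show min i (j - 1) = j - 1 by omega, show j - 1 - 2 = j - 3 by omega] at hc
      simp only [if_pos hij]
      calc φ i ≤ φ 0 / (3 * b1) * a ^ (j - 3) := hc
        _ ≤ φ 0 / (3 * b1) * (a ^ (i - 2) + a ^ (j - 3)) := by
            apply mul_le_mul_of_nonneg_left ?_ hK
            nlinarith [pow_nonneg ha0.le (i - 2)]
    · rw [show min i (j - 1) = i by omega] at hc
      simp only [if_neg hij, add_zero]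
      exact hc
  have hS : ∑ i ∈ Finset.Icc 2 m, φ i ≤
      φ 0 / (3 * b1) * ((b1 - 1) + (2 * (j:ℝ) - 1) * a ^ (j - 3)) := by
    calc ∑ i ∈ Finset.Icc 2 m, φ i
        ≤ ∑ i ∈ Finset.Icc 2 m,
            φ 0 / (3 * b1) * (a ^ (i - 2) + if j ≤ i then a ^ (j - 3) else 0) :=
          Finset.sum_le_sum hterm
      _ = φ 0 / (3 * b1) * (∑ i ∈ Finset.Icc 2 m, a ^ (i - 2) +
            ∑ i ∈ Finset.Icc 2 m, (if j ≤ i then a ^ (j - 3) else 0)) := by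
          rw [← Finset.mul_sum, Finset.sum_add_distrib]
      _ ≤ _ := by
          apply mul_le_mul_of_nonneg_left (by linarith) (by positivity)
  -- the key rpow inequality
  have hkey2 : (2 * (j:ℝ) - 1) * a ^ (j - 3) ≤
      3 * b1 * ((-2) / (3 * b1 * a ^ ((5:ℝ)/2) * Real.exp 1 * Real.log a)) := by
    have hx : (0:ℝ) < (j:ℝ) - 1/2 := by
      have : (4:ℝ) ≤ (j:ℝ) := by exact_mod_cast hj
      linarith
    have hxa := xax_le ha0 ha1 hx
    have hpow : a ^ ((j:ℝ) - 1/2) = a ^ (j - 3) * a ^ ((5:ℝ)/2) := by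
      rw [← Real.rpow_natCast a (j - 3), ← Real.rpow_add ha0]
      congr 1
      rw [Nat.cast_sub (by omega : 3 ≤ j)]
      push_cast; ring
    have hmLpos : 0 < -Real.log a := by linarith
    have hlogne : Real.log a ≠ 0 := ne_of_lt hLneg
    have hc : 3 * b1 * ((-2) / (3 * b1 * a ^ ((5:ℝ)/2) * Real.exp 1 * Real.log a)) =
        2 / (a ^ ((5:ℝ)/2) * Real.exp 1 * (-Real.log a)) := by
      field_simp
    rw [hc, le_div_iff₀ (by positivity)]
    rw [le_div_iff₀ (by positivity : 0 < Real.exp 1 * (-Real.log a))] at hxa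
    rw [hpow] at hxa
    nlinarith [hxa]
  -- final assembly
  rw [div_lt_iff₀ hφ0]
  have e1 : φ 1 < φ 0 / b1 := by rw [lt_div_iff₀ hb1p]; linarith
  set t := (-2) / (3 * b1 * a ^ ((5:ℝ)/2) * Real.exp 1 * Real.log a) with htdef
  set y := (2 * (j:ℝ) - 1) * a ^ (j - 3) with hydef
  have hid : ((b1 + 2) / (3 * b1) + t) * φ 0 -
      (φ 0 / b1 + φ 0 / (3 * b1) * ((b1 - 1) + y)) = φ 0 / (3 * b1) * (3 * b1 * t - y) := by
    field_simp; ring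
  have hfin : 0 ≤ φ 0 / (3 * b1) * (3 * b1 * t - y) :=
    mul_nonneg (by positivity) (by linarith [hkey2])
  linarith [hS, e1, hid, hfin]
end
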